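/- arXiv:2408.14278 — 2 statements merged into one kernel-verified Lean document; each statement's English description precedes it below -/
import Mathlib

section
/- Suppose (μ_j)_{j≥1} is a nondecreasing sequence of positive reals satisfying the Weyl-type bounds C₁ j^{2/d} ≤ μ_j ≤ C₂ j^{2/d} for all j ≥ 1, where d ≥ 3 and 0 < C₁ ≤ C₂. Let M be an integer with C₁ M^{2/d} > 2 C₂. Then for every k ≥ 1 there exists an integer N with k ≤ N < M k such that μ_{N+1} − μ_N ≥ C₂ k^{2/d} / ((M−1) k). -/
/-- Pigeonhole argument producing a large spectral gap from Weyl-type bounds. -/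
theorem stmt4 (d : ℕ) (hd : 3 ≤ d) (C₁ C₂ : ℝ) (hC₁ : 0 < C₁) (hC : C₁ ≤ C₂)
    (μ : ℕ → ℝ) (hmono : Monotone μ) (hpos : ∀ j, 1 ≤ j → 0 < μ j)
    (hlow : ∀ j : ℕ, 1 ≤ j → C₁ * (j : ℝ) ^ ((2 : ℝ) / d) ≤ μ j)
    (hupp : ∀ j : ℕ, 1 ≤ j → μ j ≤ C₂ * (j : ℝ) ^ ((2 : ℝ) / d))
    (M : ℕ) (hM : 2 * C₂ < C₁ * (M : ℝ) ^ ((2 : ℝ) / d)) :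
    ∀ k : ℕ, 1 ≤ k → ∃ N : ℕ, k ≤ N ∧ N < M * k ∧
      C₂ * (k : ℝ) ^ ((2 : ℝ) / d) / (((M : ℝ) - 1) * k) ≤ μ (N + 1) - μ N := by
  intro k hk
  -- M ≥ 2
  have hC₂ : 0 < C₂ := lt_of_lt_of_le hC₁ hC
  have hM1 : 2 ≤ M := by
    by_contra h
    push_neg at h
    interval_cases M
    · rw [Nat.cast_zero, Real.zero_rpow (by positivity), mul_zero] at hM
      linarith
    · rw [Nat.cast_one, Real.one_rpow, mul_one] at hM
      linarith
  have hkM : k < M * k := by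
    have h2 := Nat.mul_le_mul_right k hM1
    omega
  by_contra hcon
  push_neg at hcon
  set g : ℝ := C₂ * (k : ℝ) ^ ((2 : ℝ) / d) / (((M : ℝ) - 1) * k) with hg
  have hgap : ∀ N ∈ Finset.Ico k (M * k), μ (N + 1) - μ N < g := by
    intro N hN
    rw [Finset.mem_Ico] at hN
    exact hcon N hN.1 hN.2
  have hsum : ∑ j ∈ Finset.Ico k (M * k), (μ (j + 1) - μ j) = μ (M * k) - μ k := by
    rw [Finset.sum_Ico_eq_sum_range]
    have h2 := Finset.sum_range_sub (fun i => μ (k + i)) (M * k - k)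
    simp only [show k + (M * k - k) = M * k from by omega, Nat.add_zero] at h2
    convert h2 using 2 with i
    rw [Nat.add_assoc]
  have hne : (Finset.Ico k (M * k)).Nonempty := ⟨k, Finset.mem_Ico.mpr ⟨le_refl k, hkM⟩⟩
  have hlt : μ (M * k) - μ k < ((M * k - k : ℕ) : ℝ) * g := by
    rw [← hsum]
    have := Finset.sum_lt_sum_of_nonempty hne hgap
    simpa [Nat.card_Ico, mul_comm] using this
  -- card bound: (M*k - k : ℕ) = (M-1)*k
  have hcard : ((M * k - k : ℕ) : ℝ) = ((M : ℝ) - 1) * k := by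
    have : M * k - k = (M - 1) * k := by
      rw [Nat.sub_mul, one_mul]
    rw [this, Nat.cast_mul, Nat.cast_sub (by omega), Nat.cast_one]
  have hdenpos : (0 : ℝ) < ((M : ℝ) - 1) * k := by
    have h1 : (1 : ℝ) ≤ (M : ℝ) - 1 := by
      have : (2 : ℝ) ≤ M := by exact_mod_cast hM1
      linarith
    have h2 : (0 : ℝ) < k := by exact_mod_cast hk
    nlinarith
  have hub : μ (M * k) - μ k < C₂ * (k : ℝ) ^ ((2 : ℝ) / d) := by
    calc μ (M * k) - μ k < ((M * k - k : ℕ) : ℝ) * g := hlt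
    _ = C₂ * (k : ℝ) ^ ((2 : ℝ) / d) := by
        rw [hcard, hg]
        field_simp
        have h2r : (2 : ℝ) ≤ M := by exact_mod_cast hM1
        exact div_self (ne_of_gt (by linarith))
  -- lower bound
  have hkr : (0 : ℝ) ≤ (k : ℝ) := Nat.cast_nonneg k
  have hMk : (1 : ℕ) ≤ M * k := Nat.mul_pos (by omega) hk
  have hrp : ((M * k : ℕ) : ℝ) ^ ((2 : ℝ) / d) = (M : ℝ) ^ ((2 : ℝ) / d) * (k : ℝ) ^ ((2 : ℝ) / d) := by
    push_cast
    rw [Real.mul_rpow (Nat.cast_nonneg M) hkr]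
  have hlow' : C₁ * ((M : ℝ) ^ ((2 : ℝ) / d) * (k : ℝ) ^ ((2 : ℝ) / d)) ≤ μ (M * k) := by
    have := hlow (M * k) hMk
    rwa [hrp] at this
  have hupp' : μ k ≤ C₂ * (k : ℝ) ^ ((2 : ℝ) / d) := hupp k hk
  have hkpow : (0 : ℝ) < (k : ℝ) ^ ((2 : ℝ) / d) := by
    apply Real.rpow_pos_of_pos
    exact_mod_cast hk
  nlinarith [mul_lt_mul_of_pos_right hM hkpow]
end

section
/- Let T and T̃ be compact self-adjoint positive operators on a Hilbert space H, with k-th largest eigenvalues 1/μ_k and 1/μ̃_k respectively (counted with multiplicity). Let S_k be the span of the top-k eigenvectors of T. If |⟨(T − T̃)v, v⟩| ≤ δ ‖v‖² for all v ∈ S_k, then 1/μ_k ≤ δ + 1/μ̃_k. -/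
open scoped RealInnerProductSpace

lemma quadform_aux {H : Type*} [NormedAddCommGroup H] [InnerProductSpace ℝ H]
    [CompleteSpace H] {b : ℕ → H} (hb : Orthonormal ℝ b)
    (hsp : (Submodule.span ℝ (Set.range b)).topologicalClosure = ⊤)
    (A : H →L[ℝ] H) (hA : IsSelfAdjoint A) (ν : ℕ → ℝ)
    (heig : ∀ j, A (b j) = ν j • b j) (v : H) :
    ⟪A v, v⟫ = ∑' j, ν j * ⟪b j, v⟫ ^ 2 ∧ ‖v‖ ^ 2 = ∑' j, ⟪b j, v⟫ ^ 2 ∧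
    Summable (fun j => ⟪b j, v⟫ ^ 2) := by
  set B := HilbertBasis.mk hb hsp.ge with hBdef
  have hBb : ∀ i, B i = b i := fun i => congrFun (HilbertBasis.coe_mk _ _) i
  have h1 : ∀ x y : H, ∑' i, ⟪x, b i⟫ * ⟪b i, y⟫ = ⟪x, y⟫ := by
    intro x y
    have := B.tsum_inner_mul_inner x y
    simpa [hBb] using this
  have hsum : ∀ x y : H, Summable fun i => (⟪x, b i⟫ * ⟪b i, y⟫ : ℝ) := by
    intro x y
    have := B.summable_inner_mul_inner x y
    simpa [hBb] using this
  have hAv : ∀ j, ⟪A v, b j⟫ = ν j * ⟪b j, v⟫ := by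
    intro j
    have hs := (ContinuousLinearMap.isSelfAdjoint_iff_isSymmetric.mp hA) v (b j)
    calc ⟪A v, b j⟫ = ⟪v, A (b j)⟫ := hs
      _ = ν j * ⟪b j, v⟫ := by rw [heig j, real_inner_smul_right, real_inner_comm]
  refine ⟨?_, ?_, ?_⟩
  · rw [← h1 (A v) v]
    congr 1; funext j; rw [hAv j]; ring
  · rw [← real_inner_self_eq_norm_sq, ← h1 v v]
    congr 1; funext j; rw [real_inner_comm v (b j)]; ring
  · have := hsum v v
    have heq : (fun i => (⟪v, b i⟫ * ⟪b i, v⟫ : ℝ)) = fun i => ⟪b i, v⟫ ^ 2 := by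
      funext i; rw [real_inner_comm v (b i)]; ring
    rwa [heq] at this

/-- Comparison of eigenvalues of two compact self-adjoint positive operators whose
quadratic forms are `δ`-close on the span `S_k` of the top-(k+1) eigenvectors of the
first operator: `1/μ_k ≤ δ + 1/μ̃_k`. -/
theorem stmt10 {H : Type*} [NormedAddCommGroup H] [InnerProductSpace ℝ H]
    [CompleteSpace H]
    (T T' : H →L[ℝ] H)
    (hTc : IsCompactOperator ⇑T) (hTsa : IsSelfAdjoint T)
    (hT'c : IsCompactOperator ⇑T') (hT'sa : IsSelfAdjoint T')
    (hTpos : ∀ x : H, 0 ≤ ⟪T x, x⟫) (hT'pos : ∀ x : H, 0 ≤ ⟪T' x, x⟫)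
    (e e' : ℕ → H) (he : Orthonormal ℝ e) (he' : Orthonormal ℝ e')
    (hspan : (Submodule.span ℝ (Set.range e)).topologicalClosure = ⊤)
    (hspan' : (Submodule.span ℝ (Set.range e')).topologicalClosure = ⊤)
    (μ μ' : ℕ → ℝ) (hμpos : ∀ j, 0 < μ j) (hμ'pos : ∀ j, 0 < μ' j)
    (hμmono : Monotone μ) (hμ'mono : Monotone μ')
    (heig : ∀ j, T (e j) = (1 / μ j) • e j)
    (heig' : ∀ j, T' (e' j) = (1 / μ' j) • e' j)
    (k : ℕ) (δ : ℝ) (hδ : 0 ≤ δ)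
    (hclose : ∀ v ∈ Submodule.span ℝ (e '' Set.Iic k), |⟪(T - T') v, v⟫| ≤ δ * ‖v‖ ^ 2) :
    1 / μ k ≤ δ + 1 / μ' k := by
  classical
  set S := Submodule.span ℝ (e '' Set.Iic k) with hSdef
  have hS_fd : FiniteDimensional ℝ S :=
    FiniteDimensional.span_of_finite ℝ ((Set.finite_Iic k).image e)
  have hrank : Module.finrank ℝ S = k + 1 := by
    have hli : LinearIndependent ℝ (fun i : Set.Iic k => e i) :=
      he.linearIndependent.comp _ Subtype.val_injective
    have himg : e '' Set.Iic k = Set.range (fun i : Set.Iic k => e i) :=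
      Set.image_eq_range e _
    rw [hSdef, himg, finrank_span_eq_card hli]
    simp [Nat.card_Iic]
  let L : H →ₗ[ℝ] (Fin k → ℝ) :=
    { toFun := fun v => fun i => ⟪e' i, v⟫
      map_add' := by intros; funext i; simp [inner_add_right]
      map_smul' := by intros; funext i; simp [inner_smul_right] }
  have hker : LinearMap.ker (L.comp S.subtype) ≠ ⊥ := by
    intro h
    have hinj : Function.Injective (L.comp S.subtype) := LinearMap.ker_eq_bot.mp h
    have hle := LinearMap.finrank_le_finrank_of_injective hinj
    rw [hrank, Module.finrank_pi] at hle
    simp at hle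
  obtain ⟨w, hw, hw0⟩ := Submodule.exists_mem_ne_zero_of_ne_bot hker
  set v : H := (w : H) with hvdef
  have hvS : v ∈ S := w.2
  have hv0 : v ≠ 0 := fun h => hw0 (Subtype.ext h)
  have hperp' : ∀ j, j < k → ⟪e' j, v⟫ = 0 := by
    intro j hj
    have := LinearMap.mem_ker.mp hw
    have h2 := congrFun this ⟨j, hj⟩
    simpa [L] using h2
  have hperp : ∀ j, k < j → ⟪e j, v⟫ = 0 := by
    intro j hj
    have hall : ∀ x ∈ S, ⟪e j, x⟫ = 0 := by
      intro x hx
      induction hx using Submodule.span_induction with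
      | mem x hx =>
        obtain ⟨i, hi, rfl⟩ := hx
        have hik : i ≤ k := hi
        exact he.2 (by omega : j ≠ i)
      | zero => simp
      | add x y _ _ hx hy => rw [inner_add_right, hx, hy]; ring
      | smul c x _ hx => rw [real_inner_smul_right, hx]; ring
    exact hall v hvS
  obtain ⟨hTq, hnorm, hsumm⟩ := quadform_aux he hspan T hTsa (fun j => 1 / μ j) heig v
  obtain ⟨hT'q, hnorm', hsumm'⟩ := quadform_aux he' hspan' T' hT'sa (fun j => 1 / μ' j) heig' v
  have hnv : (0:ℝ) < ‖v‖ ^ 2 := by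
    have : ‖v‖ ≠ 0 := norm_ne_zero_iff.mpr hv0
    positivity
  -- lower bound
  have hlow : (1 / μ k) * ‖v‖ ^ 2 ≤ ⟪T v, v⟫ := by
    rw [hTq, hnorm, ← tsum_mul_left]
    refine Summable.tsum_le_tsum (fun j => ?_) (hsumm.mul_left _) ?_
    · by_cases hjk : j ≤ k
      · have h1 : 1 / μ k ≤ 1 / μ j :=
          one_div_le_one_div_of_le (hμpos j) (hμmono hjk)
        exact mul_le_mul_of_nonneg_right h1 (sq_nonneg _)
      · rw [hperp j (by omega)]; simp
    · apply summable_of_ne_finset_zero (s := Finset.Iic k)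
      intro j hj
      rw [hperp j (by simpa using hj)]
      simp
  -- upper bound
  have hup : ⟪T' v, v⟫ ≤ (1 / μ' k) * ‖v‖ ^ 2 := by
    rw [hT'q, hnorm', ← tsum_mul_left]
    refine Summable.tsum_le_tsum (fun j => ?_) ?_ (hsumm'.mul_left _)
    · by_cases hjk : j < k
      · rw [hperp' j hjk]; simp
      · have h1 : 1 / μ' j ≤ 1 / μ' k :=
          one_div_le_one_div_of_le (hμ'pos k) (hμ'mono (by omega))
        exact mul_le_mul_of_nonneg_right h1 (sq_nonneg _)
    · refine Summable.of_nonneg_of_le (fun j => ?_) (fun j => ?_) (hsumm'.mul_left (1 / μ' k))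
      · have := (hμ'pos j).le
        positivity
      · by_cases hjk : j < k
        · rw [hperp' j hjk]; simp
        · exact mul_le_mul_of_nonneg_right
            (one_div_le_one_div_of_le (hμ'pos k) (hμ'mono (by omega))) (sq_nonneg _)
  have hsplit : ⟪T v, v⟫ = ⟪(T - T') v, v⟫ + ⟪T' v, v⟫ := by
    rw [ContinuousLinearMap.sub_apply, inner_sub_left]; ring
  have hdiff : ⟪(T - T') v, v⟫ ≤ δ * ‖v‖ ^ 2 :=
    (le_abs_self _).trans (hclose v hvS)
  have hchain : (1 / μ k) * ‖v‖ ^ 2 ≤ (δ + 1 / μ' k) * ‖v‖ ^ 2 := by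
    calc (1 / μ k) * ‖v‖ ^ 2 ≤ ⟪T v, v⟫ := hlow
      _ = ⟪(T - T') v, v⟫ + ⟪T' v, v⟫ := hsplit
      _ ≤ δ * ‖v‖ ^ 2 + (1 / μ' k) * ‖v‖ ^ 2 := add_le_add hdiff hup
      _ = (δ + 1 / μ' k) * ‖v‖ ^ 2 := by ring
  exact le_of_mul_le_mul_right hchain hnv
end
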